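/- arXiv:2008.06164 — 3 statements merged into one kernel-verified Lean document; each statement's English description precedes it below -/
import Mathlib

section
/- Let y = x + n, ŷ = y + αz with α ≠ 0. Suppose E[n|x]=0, E[z|x]=0, z is independent of n given x, and Cov(z,z|x)=Cov(n,n|x). Then for every linear map R: R^m → R^m, E[‖R ŷ − (y − z/α)‖²] = E[‖R ŷ − x‖²] + E[‖n − z/α‖²]. In particular the two objective functions differ by a constant independent of R. -/
open MeasureTheory ProbabilityTheory Set Filter

section Helpers

variable {Ω : Type*} {m' : MeasurableSpace Ω} {mΩ : MeasurableSpace Ω} {μ : Measure Ω}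

lemma l2_mul_integrable {f g : Ω → ℝ} (hf : MemLp f 2 μ) (hg : MemLp g 2 μ) :
    Integrable (fun ω => f ω * g ω) μ := by
  have h : MemLp (f • g) 1 μ := MemLp.smul (E := ℝ) hg hf (p := 2) (q := 2) (r := 1)
  exact memLp_one_iff_integrable.mp h

lemma memℒp_clm_apply {k l : ℕ} {f : Ω → EuclideanSpace ℝ (Fin k)}
    (T : EuclideanSpace ℝ (Fin k) →L[ℝ] EuclideanSpace ℝ (Fin l))
    (hf : MemLp f 2 μ) (i : Fin l) : MemLp (fun ω => T (f ω) i) 2 μ := by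
  exact ((EuclideanSpace.proj (𝕜 := ℝ) i).comp T).comp_memLp' hf

lemma memℒp_apply {k : ℕ} {f : Ω → EuclideanSpace ℝ (Fin k)}
    (hf : MemLp f 2 μ) (i : Fin k) : MemLp (fun ω => f ω i) 2 μ := by
  simpa using memℒp_clm_apply (ContinuousLinearMap.id ℝ _) hf i

lemma measurable_apply' {k : ℕ} {f : Ω → EuclideanSpace ℝ (Fin k)}
    (hf : Measurable f) (i : Fin k) : Measurable (fun ω => f ω i) := by
  exact ((EuclideanSpace.proj (𝕜 := ℝ) i).measurable).comp hf

/-- component conditional expectation vanishes -/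
lemma condexp_proj_eq_zero (hm' : m' ≤ mΩ) [IsProbabilityMeasure μ]
    {k : ℕ} {f : Ω → EuclideanSpace ℝ (Fin k)} (hfi : Integrable f μ)
    (hf : μ[f | m'] =ᵐ[μ] 0) (i : Fin k) :
    μ[fun ω => f ω i | m'] =ᵐ[μ] 0 := by
  haveI : IsFiniteMeasure (μ.trim hm') := isFiniteMeasure_trim hm'
  have hfi' : Integrable (fun ω => f ω i) μ := by
    simpa using (EuclideanSpace.proj (𝕜 := ℝ) i).integrable_comp hfi
  refine (ae_eq_condExp_of_forall_setIntegral_eq hm' hfi' (g := fun _ => (0:ℝ))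
    (fun s _ _ => integrableOn_zero) (fun s hs hμs => ?_)
    (stronglyMeasurable_const : StronglyMeasurable[m'] (fun _ : Ω => (0:ℝ))).aestronglyMeasurable).symm
  have h1 : ∫ ω in s, f ω i ∂μ = (EuclideanSpace.proj (𝕜 := ℝ) i) (∫ ω in s, f ω ∂μ) := by
    rw [← ContinuousLinearMap.integral_comp_comm _ hfi.integrableOn]
    simp
  have h2 : ∫ ω in s, f ω ∂μ = 0 := by
    rw [← setIntegral_condExp hm' hfi hs]
    rw [integral_congr_ae (ae_restrict_of_ae hf)]
    simp
  rw [h1, h2]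
  simp

/-- pull-out: integral of m'-measurable times conditionally-centered is zero -/
lemma integral_mul_eq_zero_of_condexp_eq_zero (hm' : m' ≤ mΩ)
    [IsProbabilityMeasure μ] {g f : Ω → ℝ} (hgm : StronglyMeasurable[m'] g)
    (hg2 : MemLp g 2 μ) (hf2 : MemLp f 2 μ) (hfc : μ[f | m'] =ᵐ[μ] 0) :
    ∫ ω, g ω * f ω ∂μ = 0 := by
  haveI : IsFiniteMeasure (μ.trim hm') := isFiniteMeasure_trim hm'
  have hint : Integrable (g * f) μ := l2_mul_integrable hg2 hf2
  have h := condExp_mul_of_stronglyMeasurable_left hgm hint (hf2.integrable one_le_two)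
  have h0 : μ[g * f | m'] =ᵐ[μ] 0 := by
    refine h.trans ?_
    filter_upwards [hfc] with ω hω
    simp [hω]
  calc ∫ ω, g ω * f ω ∂μ = ∫ ω, (g * f) ω ∂μ := rfl
    _ = ∫ ω, (μ[g * f | m']) ω ∂μ := (integral_condExp hm').symm
    _ = ∫ ω, (0 : Ω → ℝ) ω ∂μ := integral_congr_ae h0
    _ = 0 := by simp

/-- the key conditional independence lemma -/
lemma integral_mul_eq_zero_of_condIndep [StandardBorelSpace Ω]
    {hm' : m' ≤ mΩ} [IsProbabilityMeasure μ] {f g : Ω → ℝ}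
    (hf : Measurable f) (hg : Measurable g)
    (hf2 : MemLp f 2 μ) (hg2 : MemLp g 2 μ)
    (hindep : CondIndepFun m' hm' f g μ)
    (hfc : μ[f | m'] =ᵐ[μ] 0) :
    ∫ ω, f ω * g ω ∂μ = 0 := by
  haveI : IsFiniteMeasure (μ.trim hm') := isFiniteMeasure_trim hm'
  set κ := condExpKernel μ m' with hκ
  have hae : ∀ᵐ ω ∂(μ.trim hm'), ∀ q r : ℚ,
      κ ω (f ⁻¹' Iic (q:ℝ) ∩ g ⁻¹' Iic (r:ℝ))
        = κ ω (f ⁻¹' Iic (q:ℝ)) * κ ω (g ⁻¹' Iic (r:ℝ)) := by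
    rw [ae_all_iff]
    intro q
    rw [ae_all_iff]
    intro r
    exact hindep _ _ ⟨Iic (q:ℝ), measurableSet_Iic, rfl⟩ ⟨Iic (r:ℝ), measurableSet_Iic, rfl⟩
  have hgenf : MeasurableSpace.comap f inferInstance
      = MeasurableSpace.generateFrom (Set.range fun q : ℚ => f ⁻¹' Iic (q:ℝ)) := by
    conv_lhs => rw [show (inferInstance : MeasurableSpace ℝ) = borel ℝ from
      BorelSpace.measurable_eq, Real.borel_eq_generateFrom_Iic_rat,
      MeasurableSpace.comap_generateFrom]
    congr 1
    rw [Set.image_iUnion]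
    simp only [Set.image_singleton]
    rw [Set.iUnion_singleton_eq_range]
  have hgeng : MeasurableSpace.comap g inferInstance
      = MeasurableSpace.generateFrom (Set.range fun q : ℚ => g ⁻¹' Iic (q:ℝ)) := by
    conv_lhs => rw [show (inferInstance : MeasurableSpace ℝ) = borel ℝ from
      BorelSpace.measurable_eq, Real.borel_eq_generateFrom_Iic_rat,
      MeasurableSpace.comap_generateFrom]
    congr 1
    rw [Set.image_iUnion]
    simp only [Set.image_singleton]
    rw [Set.iUnion_singleton_eq_range]
  have hpi : ∀ h : Ω → ℝ, IsPiSystem (Set.range fun q : ℚ => h ⁻¹' Iic (q:ℝ)) := by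
    rintro h _ ⟨q, rfl⟩ _ ⟨r, rfl⟩ -
    refine ⟨min q r, ?_⟩
    rw [← Set.preimage_inter, Set.Iic_inter_Iic]
    push_cast
    rfl
  have hindep_ae : ∀ᵐ ω ∂(μ.trim hm'), IndepFun f g (κ ω) := by
    filter_upwards [hae] with ω hω
    rw [IndepFun_iff_Indep]
    refine IndepSets.indep hf.comap_le hg.comap_le (hpi f) (hpi g) hgenf hgeng ?_
    rintro _ _ ⟨q, rfl⟩ ⟨r, rfl⟩
    exact Eventually.of_forall fun _ => hω q r
  have h4 : (fun ω => ∫ y, f y * g y ∂(κ ω))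
      =ᵐ[μ] fun ω => (∫ y, f y ∂(κ ω)) * ∫ y, g y ∂(κ ω) := by
    apply ae_eq_of_ae_eq_trim (hm := hm')
    filter_upwards [hindep_ae] with ω hω
    exact hω.integral_fun_mul_eq_mul_integral hf.aestronglyMeasurable hg.aestronglyMeasurable
  have h1 : μ[fun ω => f ω * g ω | m'] =ᵐ[μ] fun ω => ∫ y, f y * g y ∂(κ ω) :=
    condExp_ae_eq_integral_condExpKernel hm' (l2_mul_integrable hf2 hg2)
  have h2 : (fun ω => ∫ y, f y ∂(κ ω)) =ᵐ[μ] 0 :=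
    (condExp_ae_eq_integral_condExpKernel hm' (hf2.integrable one_le_two)).symm.trans hfc
  have h0 : μ[fun ω => f ω * g ω | m'] =ᵐ[μ] 0 := by
    refine (h1.trans (h4.trans ?_))
    filter_upwards [h2] with ω hω
    simp only [Pi.zero_apply] at hω ⊢
    rw [hω, zero_mul]
  calc ∫ ω, f ω * g ω ∂μ = ∫ ω, (μ[fun ω => f ω * g ω | m']) ω ∂μ :=
        (integral_condExp hm').symm
    _ = ∫ ω, (0 : Ω → ℝ) ω ∂μ := integral_congr_ae h0
    _ = 0 := by simp

lemma euclid_norm_sq {k : ℕ} (v : EuclideanSpace ℝ (Fin k)) :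
    ‖v‖ ^ 2 = ∑ i, (v i) ^ 2 := by
  rw [EuclideanSpace.norm_eq, Real.sq_sqrt (by positivity)]
  simp [Real.norm_eq_abs, sq_abs]

lemma euclid_decomp {k : ℕ} (v : EuclideanSpace ℝ (Fin k)) :
    v = ∑ j, v j • EuclideanSpace.single j (1:ℝ) := by
  ext i
  rw [show ((∑ j, v j • EuclideanSpace.single j (1:ℝ)) i)
      = ∑ j, (v j • EuclideanSpace.single j (1:ℝ)) i from by
    rw [WithLp.ofLp_sum, Finset.sum_apply]]
  simp [EuclideanSpace.single_apply]

end Helpers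

theorem stmt_3 {Ω : Type*} [MeasurableSpace Ω] [StandardBorelSpace Ω]
    (μ : Measure Ω) [IsProbabilityMeasure μ]
    {m : ℕ} (x n z : Ω → EuclideanSpace ℝ (Fin m))
    (hx : Measurable x) (hn : Measurable n) (hz : Measurable z)
    (hx2 : MemLp x 2 μ) (hn2 : MemLp n 2 μ) (hz2 : MemLp z 2 μ)
    (hncond : μ[n | MeasurableSpace.comap x inferInstance] =ᵐ[μ] 0)
    (hzcond : μ[z | MeasurableSpace.comap x inferInstance] =ᵐ[μ] 0)
    (hindep : CondIndepFun (MeasurableSpace.comap x inferInstance) hx.comap_le n z μ)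
    (hcov : ∀ i j : Fin m,
      μ[fun ω => n ω i * n ω j | MeasurableSpace.comap x inferInstance]
        =ᵐ[μ] μ[fun ω => z ω i * z ω j | MeasurableSpace.comap x inferInstance])
    (α : ℝ) (hα : α ≠ 0)
    (y yhat : Ω → EuclideanSpace ℝ (Fin m))
    (hy : y = fun ω => x ω + n ω) (hyhat : yhat = fun ω => y ω + α • z ω)
    (R : EuclideanSpace ℝ (Fin m) →L[ℝ] EuclideanSpace ℝ (Fin m)) :
    ∫ ω, ‖R (yhat ω) - (y ω - α⁻¹ • z ω)‖ ^ 2 ∂μ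
      = ∫ ω, ‖R (yhat ω) - x ω‖ ^ 2 ∂μ + ∫ ω, ‖n ω - α⁻¹ • z ω‖ ^ 2 ∂μ := by
  subst hy hyhat
  have hm' : MeasurableSpace.comap x inferInstance ≤ ‹MeasurableSpace Ω› := hx.comap_le
  -- scalar components
  set N : Fin m → Ω → ℝ := fun i ω => n ω i with hN
  set Z : Fin m → Ω → ℝ := fun i ω => z ω i with hZ
  have hN2 : ∀ i, MemLp (N i) 2 μ := fun i => memℒp_apply hn2 i
  have hZ2 : ∀ i, MemLp (Z i) 2 μ := fun i => memℒp_apply hz2 i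
  have hNm : ∀ i, Measurable (N i) := fun i => measurable_apply' hn i
  have hZm : ∀ i, Measurable (Z i) := fun i => measurable_apply' hz i
  have hNcond : ∀ i, μ[N i | MeasurableSpace.comap x inferInstance] =ᵐ[μ] 0 :=
    fun i => condexp_proj_eq_zero hm' (hn2.integrable one_le_two) hncond i
  have hZcond : ∀ i, μ[Z i | MeasurableSpace.comap x inferInstance] =ᵐ[μ] 0 :=
    fun i => condexp_proj_eq_zero hm' (hz2.integrable one_le_two) hzcond i
  -- cross moments
  have hNZ : ∀ i j, ∫ ω, N i ω * Z j ω ∂μ = 0 := by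
    intro i j
    refine integral_mul_eq_zero_of_condIndep (hm' := hm') (hNm i) (hZm j) (hN2 i) (hZ2 j)
      ?_ (hNcond i)
    have hφ : Measurable (fun v : EuclideanSpace ℝ (Fin m) => v i) :=
      measurable_apply' measurable_id i
    have hψ : Measurable (fun v : EuclideanSpace ℝ (Fin m) => v j) :=
      measurable_apply' measurable_id j
    exact hindep.comp hφ hψ
  have hZN : ∀ i j, ∫ ω, Z i ω * N j ω ∂μ = 0 := by
    intro i j
    refine integral_mul_eq_zero_of_condIndep (hm' := hm') (hZm i) (hNm j) (hZ2 i) (hN2 j)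
      ?_ (hZcond i)
    have hφ : Measurable (fun v : EuclideanSpace ℝ (Fin m) => v i) :=
      measurable_apply' measurable_id i
    have hψ : Measurable (fun v : EuclideanSpace ℝ (Fin m) => v j) :=
      measurable_apply' measurable_id j
    exact hindep.symm.comp hφ hψ
  have hNN : ∀ i j, ∫ ω, N i ω * N j ω ∂μ = ∫ ω, Z i ω * Z j ω ∂μ := by
    intro i j
    rw [← integral_condExp (f := fun ω => N i ω * N j ω) hm',
      ← integral_condExp (f := fun ω => Z i ω * Z j ω) hm']
    exact integral_congr_ae (hcov i j)
  -- functions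
  set yh : Ω → EuclideanSpace ℝ (Fin m) := fun ω => x ω + n ω + α • z ω with hyh
  have hyhd : (fun ω => (x ω + n ω) + α • z ω) = yh := rfl
  have hyh2 : MemLp yh 2 μ := (hx2.add hn2).add (hz2.const_smul α)
  set A : Fin m → Ω → ℝ := fun i ω => R (yh ω) i - x ω i with hA
  set w : Fin m → Ω → ℝ := fun i ω => N i ω - α⁻¹ * Z i ω with hw
  have hA2 : ∀ i, MemLp (A i) 2 μ :=
    fun i => (memℒp_clm_apply R hyh2 i).sub (memℒp_apply hx2 i)
  have hw2 : ∀ i, MemLp (w i) 2 μ :=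
    fun i => (hN2 i).sub ((hZ2 i).const_mul _)
  -- coefficients of R
  set c : Fin m → Fin m → ℝ := fun i j => R (EuclideanSpace.single j (1:ℝ)) i with hc
  have hRapply : ∀ (v : EuclideanSpace ℝ (Fin m)) i, R v i = ∑ j, v j * c i j := by
    intro v i
    conv_lhs => rw [euclid_decomp v, map_sum]
    rw [show ((∑ j, R (v j • EuclideanSpace.single j (1:ℝ))) i)
        = ∑ j, (R (v j • EuclideanSpace.single j (1:ℝ))) i from
      by rw [WithLp.ofLp_sum, Finset.sum_apply]]
    refine Finset.sum_congr rfl fun j _ => ?_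
    rw [_root_.map_smul]
    simp [hc, smul_eq_mul]
  -- cross term vanishes coordinatewise
  have hGsm : ∀ i, StronglyMeasurable[MeasurableSpace.comap x inferInstance] (fun ω => R (x ω) i - x ω i) := by
    intro i
    have hxm' : @Measurable Ω _ (MeasurableSpace.comap x inferInstance) _ x :=
      measurable_iff_comap_le.mpr le_rfl
    have hφ : Measurable (fun v : EuclideanSpace ℝ (Fin m) => R v i - v i) :=
      (measurable_apply' R.measurable i).sub (measurable_apply' measurable_id i)
    exact (hφ.comp hxm').stronglyMeasurable
  have hG2 : ∀ i, MemLp (fun ω => R (x ω) i - x ω i) 2 μ :=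
    fun i => (memℒp_clm_apply R hx2 i).sub (memℒp_apply hx2 i)
  have hGw : ∀ i, ∫ ω, (R (x ω) i - x ω i) * w i ω ∂μ = 0 := by
    intro i
    have e : ∀ ω, (R (x ω) i - x ω i) * w i ω
        = (R (x ω) i - x ω i) * N i ω - α⁻¹ * ((R (x ω) i - x ω i) * Z i ω) := by
      intro ω; simp only [hw]; ring
    rw [integral_congr_ae (Eventually.of_forall e), integral_sub
      (l2_mul_integrable (hG2 i) (hN2 i))
      ((l2_mul_integrable (hG2 i) (hZ2 i)).const_mul _),
      integral_const_mul,
      integral_mul_eq_zero_of_condexp_eq_zero hm' (hGsm i) (hG2 i) (hN2 i) (hNcond i),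
      integral_mul_eq_zero_of_condexp_eq_zero hm' (hGsm i) (hG2 i) (hZ2 i) (hZcond i)]
    ring
  have hfw : ∀ (f : Fin m → Ω → ℝ), (∀ j, MemLp (f j) 2 μ) → ∀ i,
      ∫ ω, (∑ j, f j ω * c i j) * w i ω ∂μ
        = ∑ j, c i j * ∫ ω, f j ω * w i ω ∂μ := by
    intro f hf i
    have e : ∀ ω, (∑ j, f j ω * c i j) * w i ω = ∑ j, c i j * (f j ω * w i ω) := by
      intro ω
      rw [Finset.sum_mul]
      exact Finset.sum_congr rfl fun j _ => by ring
    rw [integral_congr_ae (Eventually.of_forall e), integral_finset_sum _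
      (fun j _ => (l2_mul_integrable (hf j) (hw2 i)).const_mul _)]
    exact Finset.sum_congr rfl fun j _ => integral_const_mul _ _
  have hfw' : ∀ (f : Fin m → Ω → ℝ), (∀ j, MemLp (f j) 2 μ) → ∀ i j,
      ∫ ω, f j ω * w i ω ∂μ
        = ∫ ω, f j ω * N i ω ∂μ - α⁻¹ * ∫ ω, f j ω * Z i ω ∂μ := by
    intro f hf i j
    have e : ∀ ω, f j ω * w i ω = f j ω * N i ω - α⁻¹ * (f j ω * Z i ω) := by
      intro ω; simp only [hw]; ring
    rw [integral_congr_ae (Eventually.of_forall e), integral_sub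
      (l2_mul_integrable (hf j) (hN2 i))
      ((l2_mul_integrable (hf j) (hZ2 i)).const_mul _), integral_const_mul]
  have hcross : ∀ i, ∫ ω, A i ω * w i ω ∂μ = 0 := by
    intro i
    have e : ∀ ω, A i ω * w i ω
        = (R (x ω) i - x ω i) * w i ω + (∑ j, N j ω * c i j) * w i ω
          + α * ((∑ j, Z j ω * c i j) * w i ω) := by
      intro ω
      have : A i ω = (R (x ω) i - x ω i) + (∑ j, N j ω * c i j)
          + α * (∑ j, Z j ω * c i j) := by
        simp only [hA, hyh]
        rw [map_add, map_add, _root_.map_smul]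
        have h1 : (R (x ω) + R (n ω) + α • R (z ω)) i
            = R (x ω) i + R (n ω) i + α * R (z ω) i := rfl
        rw [h1, hRapply (n ω) i, hRapply (z ω) i]
        simp only [hN, hZ]
        ring
      rw [this]; ring
    have hsum : ∀ (f : Fin m → Ω → ℝ), (∀ j, MemLp (f j) 2 μ) →
        Integrable (fun ω => (∑ j, f j ω * c i j) * w i ω) μ := by
      intro f hf
      have e2 : ∀ ω, (∑ j, f j ω * c i j) * w i ω = ∑ j, c i j * (f j ω * w i ω) := by
        intro ω
        rw [Finset.sum_mul]
        exact Finset.sum_congr rfl fun j _ => by ring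
      have erw : (fun ω => (∑ j, f j ω * c i j) * w i ω)
          = fun ω => ∑ j, c i j * (f j ω * w i ω) := funext e2
      rw [erw]
      exact integrable_finset_sum Finset.univ
        (fun j _ => ((l2_mul_integrable (hf j) (hw2 i)).const_mul (c i j)))
    have hInt1 : Integrable (fun ω => (R (x ω) i - x ω i) * w i ω
        + (∑ j, N j ω * c i j) * w i ω) μ :=
      (l2_mul_integrable (hG2 i) (hw2 i)).add (hsum N hN2)
    rw [integral_congr_ae (Eventually.of_forall e), integral_add hInt1
      ((hsum Z hZ2).const_mul α), integral_add
      (l2_mul_integrable (hG2 i) (hw2 i)) (hsum N hN2),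
      integral_const_mul, hGw i, hfw N hN2 i, hfw Z hZ2 i]
    have hNterm : ∀ j, ∫ ω, N j ω * w i ω ∂μ = ∫ ω, N j ω * N i ω ∂μ := by
      intro j
      rw [hfw' N hN2 i j, hNZ j i]
      ring
    have hZterm : ∀ j, ∫ ω, Z j ω * w i ω ∂μ = - (α⁻¹ * ∫ ω, Z j ω * Z i ω ∂μ) := by
      intro j
      rw [hfw' Z hZ2 i j, hZN j i]
      ring
    simp only [hNterm, hZterm]
    have : ∑ j, c i j * ∫ ω, N j ω * N i ω ∂μ
        = ∑ j, c i j * ∫ ω, Z j ω * Z i ω ∂μ := by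
      exact Finset.sum_congr rfl fun j _ => by rw [hNN j i]
    rw [this]
    have hsum2 : ∑ j, c i j * -(α⁻¹ * ∫ ω, Z j ω * Z i ω ∂μ)
        = -(α⁻¹ * ∑ j, c i j * ∫ ω, Z j ω * Z i ω ∂μ) := by
      rw [Finset.mul_sum, ← Finset.sum_neg_distrib]
      exact Finset.sum_congr rfl fun j _ => by ring
    rw [hsum2]
    field_simp
    ring
  -- norm identities
  have hLnorm : ∀ ω : Ω, ‖R (yh ω) - (x ω + n ω - α⁻¹ • z ω)‖ ^ 2
      = ∑ i, (A i ω - w i ω) ^ 2 := by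
    intro ω
    rw [euclid_norm_sq]
    refine Finset.sum_congr rfl fun i _ => ?_
    congr 1
    have h1 : (R (yh ω) - (x ω + n ω - α⁻¹ • z ω)) i
        = R (yh ω) i - (x ω i + n ω i - α⁻¹ * z ω i) := by
      simp [smul_eq_mul]
    rw [h1]
    simp only [hA, hw, hN, hZ]
    ring
  have hRnorm1 : ∀ ω : Ω, ‖R (yh ω) - x ω‖ ^ 2 = ∑ i, (A i ω) ^ 2 := by
    intro ω
    rw [euclid_norm_sq]
    refine Finset.sum_congr rfl fun i _ => ?_
    congr 1
  have hRnorm2 : ∀ ω : Ω, ‖n ω - α⁻¹ • z ω‖ ^ 2 = ∑ i, (w i ω) ^ 2 := by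
    intro ω
    rw [euclid_norm_sq]
    refine Finset.sum_congr rfl fun i _ => ?_
    congr 1
  have e1 : ∫ ω, ‖R (yh ω) - (x ω + n ω - α⁻¹ • z ω)‖ ^ 2 ∂μ
      = ∑ i, ∫ ω, (A i ω - w i ω) ^ 2 ∂μ := by
    rw [integral_congr_ae (Eventually.of_forall hLnorm)]
    exact integral_finset_sum _ (fun i _ => ((hA2 i).sub (hw2 i)).integrable_sq)
  have e2 : ∫ ω, ‖R (yh ω) - x ω‖ ^ 2 ∂μ = ∑ i, ∫ ω, (A i ω) ^ 2 ∂μ := by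
    rw [integral_congr_ae (Eventually.of_forall hRnorm1)]
    exact integral_finset_sum _ (fun i _ => (hA2 i).integrable_sq)
  have e3 : ∫ ω, ‖n ω - α⁻¹ • z ω‖ ^ 2 ∂μ = ∑ i, ∫ ω, (w i ω) ^ 2 ∂μ := by
    rw [integral_congr_ae (Eventually.of_forall hRnorm2)]
    exact integral_finset_sum _ (fun i _ => (hw2 i).integrable_sq)
  have e4 : ∀ i : Fin m, ∫ ω, (A i ω - w i ω) ^ 2 ∂μ
      = ∫ ω, (A i ω) ^ 2 ∂μ + ∫ ω, (w i ω) ^ 2 ∂μ := by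
    intro i
    have e : ∀ ω, (A i ω - w i ω) ^ 2
        = (A i ω ^ 2 + w i ω ^ 2) - 2 * (A i ω * w i ω) := by
      intro ω; ring
    have hInt2 : Integrable (fun ω => A i ω ^ 2 + w i ω ^ 2) μ :=
      (hA2 i).integrable_sq.add (hw2 i).integrable_sq
    rw [integral_congr_ae (Eventually.of_forall e), integral_sub hInt2
      ((l2_mul_integrable (hA2 i) (hw2 i)).const_mul 2), integral_add
      (hA2 i).integrable_sq (hw2 i).integrable_sq, integral_const_mul, hcross i]
    ring
  have main : ∫ ω, ‖R (yh ω) - (x ω + n ω - α⁻¹ • z ω)‖ ^ 2 ∂μ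
      = ∫ ω, ‖R (yh ω) - x ω‖ ^ 2 ∂μ + ∫ ω, ‖n ω - α⁻¹ • z ω‖ ^ 2 ∂μ := by
    rw [e1, e2, e3, ← Finset.sum_add_distrib]
    exact Finset.sum_congr rfl fun i _ => e4 i
  exact main
end

section
/- Let J be a convex functional on a convex set C of the form J(R) = E[‖R(ŷ) − w‖²] for a fixed square-integrable random vector w, and let R* ∈ C satisfy J(R*) ≤ inf_{R∈C} J(R) + δ. Then for every R ∈ C and every s ∈ (0,1], (1−s) E[‖R(ŷ) − R*(ŷ)‖²] ≤ E[‖R(ŷ) − w‖²] − E[‖R*(ŷ) − w‖²] + δ/s. -/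
open MeasureTheory

private lemma aux_integrable_inner {Ω : Type*} [MeasurableSpace Ω] {μ : Measure Ω}
    {E : Type*} [NormedAddCommGroup E] [InnerProductSpace ℝ E]
    {f g : Ω → E} (hf : MemLp f 2 μ) (hg : MemLp g 2 μ) :
    Integrable (fun ω => (inner ℝ (f ω) (g ω) : ℝ)) μ := by
  have h := L2.integrable_inner (𝕜 := ℝ) (hf.toLp f) (hg.toLp g)
  refine h.congr ?_
  filter_upwards [hf.coeFn_toLp, hg.coeFn_toLp] with ω h1 h2
  simp [h1, h2]

private lemma aux_integrable_sq {Ω : Type*} [MeasurableSpace Ω] {μ : Measure Ω}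
    {E : Type*} [NormedAddCommGroup E] [InnerProductSpace ℝ E]
    {f : Ω → E} (hf : MemLp f 2 μ) :
    Integrable (fun ω => ‖f ω‖ ^ 2) μ := by
  refine (aux_integrable_inner hf hf).congr ?_
  filter_upwards with ω
  rw [real_inner_self_eq_norm_sq]

private lemma aux_expand {Ω : Type*} [MeasurableSpace Ω] {μ : Measure Ω}
    {E : Type*} [NormedAddCommGroup E] [InnerProductSpace ℝ E]
    {X Y : Ω → E} (hX : MemLp X 2 μ) (hY : MemLp Y 2 μ) (t : ℝ) :
    ∫ ω, ‖X ω + t • Y ω‖ ^ 2 ∂μ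
      = (∫ ω, ‖X ω‖ ^ 2 ∂μ) + 2 * t * (∫ ω, (inner ℝ (X ω) (Y ω) : ℝ) ∂μ)
        + t ^ 2 * ∫ ω, ‖Y ω‖ ^ 2 ∂μ := by
  have hptw : ∀ ω, ‖X ω + t • Y ω‖ ^ 2
      = ‖X ω‖ ^ 2 + 2 * t * (inner ℝ (X ω) (Y ω) : ℝ) + t ^ 2 * ‖Y ω‖ ^ 2 := by
    intro ω
    rw [norm_add_sq_real, real_inner_smul_right, norm_smul, Real.norm_eq_abs, mul_pow, sq_abs]
    ring
  simp_rw [hptw]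
  rw [integral_add (f := fun ω => ‖X ω‖ ^ 2 + 2 * t * (inner ℝ (X ω) (Y ω) : ℝ))
      (g := fun ω => t ^ 2 * ‖Y ω‖ ^ 2)
      ((aux_integrable_sq hX).add ((aux_integrable_inner hX hY).const_mul (2 * t)))
      ((aux_integrable_sq hY).const_mul (t ^ 2)),
    integral_add (f := fun ω => ‖X ω‖ ^ 2) (g := fun ω => 2 * t * (inner ℝ (X ω) (Y ω) : ℝ))
      (aux_integrable_sq hX) ((aux_integrable_inner hX hY).const_mul (2 * t)),
    integral_const_mul, integral_const_mul]

theorem stmt_10 {Ω : Type*} [MeasurableSpace Ω] (μ : Measure Ω) [IsProbabilityMeasure μ]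
    {m : ℕ} (yhat w : Ω → EuclideanSpace ℝ (Fin m))
    (hyhat2 : MemLp yhat 2 μ) (hw2 : MemLp w 2 μ)
    (C : Set (EuclideanSpace ℝ (Fin m) → EuclideanSpace ℝ (Fin m)))
    (hCconv : ∀ R₁ ∈ C, ∀ R₂ ∈ C, ∀ t ∈ Set.Icc (0 : ℝ) 1,
      (fun v => t • R₁ v + (1 - t) • R₂ v) ∈ C)
    (hC2 : ∀ R ∈ C, MemLp (fun ω => R (yhat ω)) 2 μ)
    (δ : ℝ) (hδ : δ ∈ Set.Ioo (0 : ℝ) 1)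
    (Rstar : EuclideanSpace ℝ (Fin m) → EuclideanSpace ℝ (Fin m)) (hRstar : Rstar ∈ C)
    (hmin : ∀ R ∈ C,
      ∫ ω, ‖Rstar (yhat ω) - w ω‖ ^ 2 ∂μ ≤ (∫ ω, ‖R (yhat ω) - w ω‖ ^ 2 ∂μ) + δ) :
    ∀ R ∈ C, ∀ s ∈ Set.Ioc (0 : ℝ) 1,
      (1 - s) * ∫ ω, ‖R (yhat ω) - Rstar (yhat ω)‖ ^ 2 ∂μ
        ≤ (∫ ω, ‖R (yhat ω) - w ω‖ ^ 2 ∂μ) - (∫ ω, ‖Rstar (yhat ω) - w ω‖ ^ 2 ∂μ) + δ / s := by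
  intro R hR s hs
  obtain ⟨hs0, hs1⟩ := hs
  have hf : MemLp (fun ω => R (yhat ω)) 2 μ := hC2 R hR
  have hg : MemLp (fun ω => Rstar (yhat ω)) 2 μ := hC2 Rstar hRstar
  set X : Ω → EuclideanSpace ℝ (Fin m) := fun ω => Rstar (yhat ω) - w ω with hXdef
  set Y : Ω → EuclideanSpace ℝ (Fin m) := fun ω => R (yhat ω) - Rstar (yhat ω) with hYdef
  have hX : MemLp X 2 μ := hg.sub hw2
  have hY : MemLp Y 2 μ := hf.sub hg
  set I0 : ℝ := ∫ ω, ‖X ω‖ ^ 2 ∂μ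
  set A : ℝ := ∫ ω, ‖Y ω‖ ^ 2 ∂μ
  set B : ℝ := ∫ ω, (inner ℝ (X ω) (Y ω) : ℝ) ∂μ
  -- the perturbed map
  have hRs : (fun v => s • R v + (1 - s) • Rstar v) ∈ C :=
    hCconv R hR Rstar hRstar s ⟨le_of_lt hs0, hs1⟩
  have key := hmin _ hRs
  have hptw1 : ∀ ω, (fun v => s • R v + (1 - s) • Rstar v) (yhat ω) - w ω
      = X ω + s • Y ω := by
    intro ω
    simp only [hXdef, hYdef, smul_sub, sub_smul, one_smul]
    abel
  have hint1 : ∫ ω, ‖(fun v => s • R v + (1 - s) • Rstar v) (yhat ω) - w ω‖ ^ 2 ∂μ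
      = I0 + 2 * s * B + s ^ 2 * A := by
    simp_rw [hptw1]; exact aux_expand hX hY s
  have hptw2 : ∀ ω, R (yhat ω) - w ω = X ω + (1 : ℝ) • Y ω := by
    intro ω
    simp only [hXdef, hYdef, one_smul]
    abel
  have hint2 : ∫ ω, ‖R (yhat ω) - w ω‖ ^ 2 ∂μ = I0 + 2 * 1 * B + 1 ^ 2 * A := by
    simp_rw [hptw2]; exact aux_expand hX hY 1
  rw [hint1] at key
  have hI0 : ∫ ω, ‖Rstar (yhat ω) - w ω‖ ^ 2 ∂μ = I0 := rfl
  have hA : ∫ ω, ‖R (yhat ω) - Rstar (yhat ω)‖ ^ 2 ∂μ = A := rfl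
  rw [hint2]
  have hds : δ / s * s = δ := div_mul_cancel₀ δ (ne_of_gt hs0)
  nlinarith [key, hs0, mul_pos hs0 hs0]
end

section
/- Under the assumptions of the previous proposition, if x is deterministic (its distribution is a point mass at a fixed image x₀), then the δ-minimizers R^{ε,δ} of the MSE and R̂^{ε,δ} of the surrogate loss over R_ε satisfy E[‖R^{ε,δ}(ŷ) − R̂^{ε,δ}(ŷ)‖²] ≤ (ε² + 2√δ)/(1 − √δ). -/
open MeasureTheory ProbabilityTheory

section Helpers

variable {Ω : Type*} {m' : MeasurableSpace Ω} [mΩ : MeasurableSpace Ω] [StandardBorelSpace Ω]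
  {μ : Measure Ω} [IsProbabilityMeasure μ] (hm' : m' ≤ mΩ)

/-- a.e. independence under the conditional expectation kernel. -/
lemma ae_indepFun_condExpKernel {f g : Ω → ℝ} (hf : Measurable f) (hg : Measurable g)
    (hind : CondIndepFun m' hm' f g μ) :
    ∀ᵐ ω ∂μ, IndepFun f g ((condExpKernel μ m') ω) := by
  have hK : Kernel.IndepFun f g (condExpKernel μ m') (μ.trim hm') := hind
  have hae : ∀ᵐ ω ∂μ, ∀ (q r : ℚ),
      (condExpKernel μ m') ω (f ⁻¹' Set.Iio (q:ℝ) ∩ g ⁻¹' Set.Iio (r:ℝ))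
        = (condExpKernel μ m') ω (f ⁻¹' Set.Iio (q:ℝ)) * (condExpKernel μ m') ω (g ⁻¹' Set.Iio (r:ℝ)) := by
    rw [ae_all_iff]
    intro q
    rw [ae_all_iff]
    intro r
    refine ae_of_ae_trim hm' ?_
    exact hK (f ⁻¹' Set.Iio (q:ℝ)) (g ⁻¹' Set.Iio (r:ℝ))
      ⟨Set.Iio (q:ℝ), measurableSet_Iio, rfl⟩ ⟨Set.Iio (r:ℝ), measurableSet_Iio, rfl⟩
  filter_upwards [hae] with ω hω
  haveI : IsProbabilityMeasure ((condExpKernel μ m') ω) := by infer_instance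
  have hpi : IsPiSystem (⋃ a : ℚ, {Set.Iio (a:ℝ)}) := Real.isPiSystem_Iio_rat
  set p1 : Set (Set Ω) := {s | ∃ t ∈ (⋃ a : ℚ, {Set.Iio (a:ℝ)}), f ⁻¹' t = s} with hp1def
  set p2 : Set (Set Ω) := {s | ∃ t ∈ (⋃ a : ℚ, {Set.Iio (a:ℝ)}), g ⁻¹' t = s} with hp2def
  have h1 : MeasurableSpace.comap f inferInstance = MeasurableSpace.generateFrom p1 := by
    conv_lhs => rw [show (inferInstance : MeasurableSpace ℝ) = borel ℝ from rfl,
      Real.borel_eq_generateFrom_Iio_rat, MeasurableSpace.comap_generateFrom]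
    congr 1
  have h2 : MeasurableSpace.comap g inferInstance = MeasurableSpace.generateFrom p2 := by
    conv_lhs => rw [show (inferInstance : MeasurableSpace ℝ) = borel ℝ from rfl,
      Real.borel_eq_generateFrom_Iio_rat, MeasurableSpace.comap_generateFrom]
    congr 1
  have hIndep : Indep (MeasurableSpace.comap f inferInstance) (MeasurableSpace.comap g inferInstance)
      ((condExpKernel μ m') ω) := by
    refine IndepSets.indep hf.comap_le hg.comap_le (hpi.comap f) (hpi.comap g) h1 h2 ?_
    rintro t1 t2 ⟨s1, hs1, rfl⟩ ⟨s2, hs2, rfl⟩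
    simp only [Set.mem_iUnion, Set.mem_singleton_iff] at hs1 hs2
    obtain ⟨q, rfl⟩ := hs1
    obtain ⟨r, rfl⟩ := hs2
    exact Filter.Eventually.of_forall fun _ => hω q r
  exact hIndep

/-- MemLp 2 functions have integrable inner product. -/
lemma integrable_inner_of_memL2 {α : Type*} {mα : MeasurableSpace α} {ν : Measure α}
    {E : Type*} [NormedAddCommGroup E] [InnerProductSpace ℝ E]
    {f g : α → E} (hf : MemLp f 2 ν) (hg : MemLp g 2 ν) :
    Integrable (fun ω => (inner ℝ (f ω) (g ω) : ℝ)) ν := by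
  have h := L2.integrable_inner (𝕜 := ℝ) (hf.toLp f) (hg.toLp g)
  refine h.congr ?_
  filter_upwards [hf.coeFn_toLp, hg.coeFn_toLp] with ω h1 h2
  rw [h1, h2]

lemma integrable_mul_of_memL2 {α : Type*} {mα : MeasurableSpace α} {ν : Measure α}
    {f g : α → ℝ} (hf : MemLp f 2 ν) (hg : MemLp g 2 ν) :
    Integrable (fun ω => f ω * g ω) ν := by
  have := integrable_inner_of_memL2 (E := ℝ) hf hg
  simpa [real_inner_eq_re_inner, mul_comm] using this

lemma integrable_norm_sq_of_memL2 {α : Type*} {mα : MeasurableSpace α} {ν : Measure α}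
    {E : Type*} [NormedAddCommGroup E] [InnerProductSpace ℝ E]
    {f : α → E} (hf : MemLp f 2 ν) :
    Integrable (fun ω => ‖f ω‖^2) ν := by
  have := integrable_inner_of_memL2 hf hf
  simpa [real_inner_self_eq_norm_sq] using this

lemma integral_norm_sub_sq_of_memL2 {α : Type*} {mα : MeasurableSpace α} {ν : Measure α}
    {E : Type*} [NormedAddCommGroup E] [InnerProductSpace ℝ E]
    {f g : α → E} (hf : MemLp f 2 ν) (hg : MemLp g 2 ν) :
    ∫ ω, ‖f ω - g ω‖^2 ∂ν
      = ∫ ω, ‖f ω‖^2 ∂ν - 2 * ∫ ω, (inner ℝ (f ω) (g ω) : ℝ) ∂ν + ∫ ω, ‖g ω‖^2 ∂ν := by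
  have h1 : (fun ω => ‖f ω - g ω‖^2) = fun ω => ‖f ω‖^2 - 2 * (inner ℝ (f ω) (g ω) : ℝ) + ‖g ω‖^2 := by
    funext ω
    rw [norm_sub_sq_real]
  have hA : Integrable (fun ω => ‖f ω‖^2 - 2 * (inner ℝ (f ω) (g ω) : ℝ)) ν := by
    exact (integrable_norm_sq_of_memL2 hf).sub ((integrable_inner_of_memL2 hf hg).const_mul 2)
  rw [h1, integral_add hA (integrable_norm_sq_of_memL2 hg),
    integral_sub (integrable_norm_sq_of_memL2 hf) ((integrable_inner_of_memL2 hf hg).const_mul 2),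
    integral_const_mul]

lemma integral_mul_eq_zero_of_condIndepFun {f g : Ω → ℝ}
    (hf : Measurable f) (hg : Measurable g) (hf2 : MemLp f 2 μ) (hg2 : MemLp g 2 μ)
    (hind : CondIndepFun m' hm' f g μ) (hf0 : μ[f|m'] =ᵐ[μ] 0) :
    ∫ ω, f ω * g ω ∂μ = 0 := by
  have hfg_int : Integrable (fun ω => f ω * g ω) μ := integrable_mul_of_memL2 hf2 hg2
  have h1 : μ[fun ω => f ω * g ω|m'] =ᵐ[μ] (0 : Ω → ℝ) := by
    have h2 := condExp_ae_eq_integral_condExpKernel (m := m') hm' hfg_int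
    have h3 := condExp_ae_eq_integral_condExpKernel (m := m') hm' (hf2.integrable one_le_two)
    have hprod := ae_indepFun_condExpKernel hm' hf hg hind
    refine h2.trans ?_
    filter_upwards [hprod, h3.symm.trans hf0] with ω hω hfω
    have hmul : ∫ y, f y * g y ∂((condExpKernel μ m') ω)
        = (∫ y, f y ∂((condExpKernel μ m') ω)) * ∫ y, g y ∂((condExpKernel μ m') ω) :=
      IndepFun.integral_fun_mul_eq_mul_integral hω hf.aestronglyMeasurable hg.aestronglyMeasurable
    simp only [Pi.zero_apply] at hfω ⊢
    rw [hmul, hfω, zero_mul]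
  calc ∫ ω, f ω * g ω ∂μ = ∫ ω, (μ[fun ω => f ω * g ω|m']) ω ∂μ := (integral_condExp hm').symm
    _ = 0 := by rw [integral_congr_ae h1]; simp

lemma condexp_comp_clm_eq_zero (hm' : m' ≤ mΩ) {E : Type*} [NormedAddCommGroup E]
    [NormedSpace ℝ E] [CompleteSpace E]
    {n : Ω → E} (hn1 : Integrable n μ) (hncond : μ[n|m'] =ᵐ[μ] 0) (T : E →L[ℝ] ℝ) :
    μ[fun ω => T (n ω)|m'] =ᵐ[μ] 0 := by
  refine (ae_eq_condExp_of_forall_setIntegral_eq hm' (T.integrable_comp hn1)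
    (fun s _ _ => (integrableOn_zero : IntegrableOn (fun _ => (0:ℝ)) s μ))
    (fun s hs hμs => ?_) ?_).symm
  · have h1 : ∫ ω in s, T (n ω) ∂μ = T (∫ ω in s, n ω ∂μ) :=
      T.integral_comp_comm hn1.integrableOn
    have h2 : ∫ ω in s, n ω ∂μ = ∫ ω in s, (μ[n|m']) ω ∂μ :=
      (setIntegral_condExp hm' hn1 hs).symm
    have h3 : ∫ ω in s, (μ[n|m']) ω ∂μ = 0 := by
      rw [setIntegral_congr_ae (hm' s hs) (hncond.mono fun ω h _ => h)]
      simp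
    simp [h1, h2, h3]
  · exact aestronglyMeasurable_const

lemma inner_clm_expand {k : ℕ} (T : EuclideanSpace ℝ (Fin k) →L[ℝ] EuclideanSpace ℝ (Fin k))
    (u v : EuclideanSpace ℝ (Fin k)) :
    (inner ℝ (T u) v : ℝ)
      = ∑ j, ∑ i, (T (EuclideanSpace.single j 1)) i * (u j * v i) := by
  have hu : u = ∑ j, u j • EuclideanSpace.single j (1:ℝ) := by
    have := (EuclideanSpace.basisFun (Fin k) ℝ).sum_repr u
    simpa [EuclideanSpace.basisFun_apply, EuclideanSpace.basisFun_repr] using this.symm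
  conv_lhs => rw [hu]
  rw [map_sum, sum_inner]
  refine Finset.sum_congr rfl fun j _ => ?_
  rw [ContinuousLinearMap.map_smul, real_inner_smul_left]
  have : (inner ℝ (T (EuclideanSpace.single j 1)) v : ℝ)
      = ∑ i, (T (EuclideanSpace.single j 1)) i * v i := by
    simp [PiLp.inner_apply, RCLike.inner_apply, starRingEnd_apply, mul_comm]
  rw [this, Finset.mul_sum]
  refine Finset.sum_congr rfl fun i _ => by ring

lemma norm_sub_sq_le_weighted {E : Type*} [NormedAddCommGroup E] {t : ℝ} (ht : 0 < t)
    (p q : E) : ‖p - q‖^2 ≤ (1 + 1/t) * ‖p‖^2 + (1 + t) * ‖q‖^2 := by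
  have h := norm_sub_le p q
  have h0 : 0 ≤ ‖p‖ := norm_nonneg p
  have h1 : 0 ≤ ‖q‖ := norm_nonneg q
  have h2 : 0 ≤ ‖p - q‖ := norm_nonneg _
  have h1t : t * (1/t) = 1 := mul_one_div_cancel (ne_of_gt ht)
  have hsq : ‖p - q‖^2 ≤ (‖p‖ + ‖q‖)^2 := by nlinarith
  have key : 2 * (‖p‖ * ‖q‖) ≤ (1/t) * ‖p‖^2 + t * ‖q‖^2 := by
    nlinarith [mul_nonneg (le_of_lt (one_div_pos.2 ht)) (sq_nonneg (‖p‖ - t * ‖q‖)), h1t]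
  nlinarith [hsq, key]

lemma final_num {ε δ : ℝ} (hε : 0 < ε) (hδ0 : 0 < δ) (hδ1 : δ < 1) :
    (1 + 1/(Real.sqrt δ/(ε+Real.sqrt δ))) * δ + (1 + Real.sqrt δ/(ε+Real.sqrt δ)) * (ε^2+δ)
      ≤ (ε^2 + 2*Real.sqrt δ)/(1 - Real.sqrt δ) := by
  set s := Real.sqrt δ with hsdef
  have hs0 : 0 < s := Real.sqrt_pos.2 hδ0
  have hs1 : s < 1 := by
    rw [hsdef, show (1:ℝ) = Real.sqrt 1 by simp]
    exact Real.sqrt_lt_sqrt hδ0.le hδ1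
  have hδs : δ = s^2 := (Real.sq_sqrt hδ0.le).symm
  have hεs : 0 < ε + s := by linarith
  have h1 : 1/(s/(ε+s)) = (ε+s)/s := one_div_div _ _
  have hstep : (1 + s/(ε+s)) * (ε^2+δ) ≤ (ε^2 + s^2) + s*(ε+s) := by
    rw [hδs, add_mul, one_mul]
    have : s/(ε+s) * (ε^2+s^2) ≤ s*(ε+s) := by
      rw [div_mul_eq_mul_div, div_le_iff₀ hεs]
      nlinarith [mul_pos hε hs0]
    linarith
  have hstep2 : (1 + 1/(s/(ε+s))) * δ = s^2 + s*(ε+s) := by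
    rw [h1, hδs, add_mul, one_mul, div_mul_eq_mul_div]
    field_simp
  have hmain : ε^2 + 4*s^2 + 2*s*ε ≤ (ε^2 + 2*s)/(1-s) := by
    rw [le_div_iff₀ (by linarith : (0:ℝ) < 1 - s)]
    nlinarith [mul_nonneg hs0.le (sq_nonneg (ε-1)), mul_nonneg hs0.le (sq_nonneg (1-2*s)),
      mul_nonneg (mul_nonneg hs0.le hs0.le) hε.le, mul_pos hs0 hε]
  calc (1 + 1/(s/(ε+s))) * δ + (1 + s/(ε+s)) * (ε^2+δ)
      ≤ (s^2 + s*(ε+s)) + ((ε^2 + s^2) + s*(ε+s)) := by rw [hstep2]; linarith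
    _ = ε^2 + 4*s^2 + 2*s*ε := by ring
    _ ≤ (ε^2 + 2*s)/(1-s) := hmain

end Helpers
/-- The set of partially linear denoisers with residual variance at most `ε ^ 2`. -/
def PartiallyLinearDenoisers {Ω : Type*} [MeasurableSpace Ω] (μ : Measure Ω)
    {m : ℕ} (x nhat : Ω → EuclideanSpace ℝ (Fin m)) (ε : ℝ) :
    Set (EuclideanSpace ℝ (Fin m) → EuclideanSpace ℝ (Fin m)) :=
  {R | Measurable R ∧
    ∃ (g : EuclideanSpace ℝ (Fin m) → EuclideanSpace ℝ (Fin m))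
      (L : EuclideanSpace ℝ (Fin m) → EuclideanSpace ℝ (Fin m) →L[ℝ] EuclideanSpace ℝ (Fin m))
      (e : Ω → EuclideanSpace ℝ (Fin m)),
        Measurable g ∧ MemLp e 2 μ ∧
        (∀ᵐ ω ∂μ, R (x ω + nhat ω) = g (x ω) + L (x ω) (nhat ω) + e ω) ∧
        ∫ ω, ‖e ω‖ ^ 2 ∂μ ≤ ε ^ 2}

theorem stmt_12 {Ω : Type*} [MeasurableSpace Ω] [StandardBorelSpace Ω]
    (μ : Measure Ω) [IsProbabilityMeasure μ]
    {m : ℕ} (x n z : Ω → EuclideanSpace ℝ (Fin m))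
    (hx : Measurable x) (hn : Measurable n) (hz : Measurable z)
    (hx2 : MemLp x 2 μ) (hn2 : MemLp n 2 μ) (hz2 : MemLp z 2 μ)
    (hncond : μ[n | MeasurableSpace.comap x inferInstance] =ᵐ[μ] 0)
    (hzcond : μ[z | MeasurableSpace.comap x inferInstance] =ᵐ[μ] 0)
    (hindep : CondIndepFun (MeasurableSpace.comap x inferInstance) hx.comap_le n z μ)
    (hcov : ∀ i j : Fin m,
      μ[fun ω => n ω i * n ω j | MeasurableSpace.comap x inferInstance]
        =ᵐ[μ] μ[fun ω => z ω i * z ω j | MeasurableSpace.comap x inferInstance])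
    (α : ℝ) (hα : α ≠ 0)
    (y nhat yhat : Ω → EuclideanSpace ℝ (Fin m))
    (hy : y = fun ω => x ω + n ω)
    (hnhat : nhat = fun ω => n ω + α • z ω)
    (hyhat : yhat = fun ω => x ω + nhat ω)
    (ε : ℝ) (hε : 0 < ε) (δ : ℝ) (hδ : δ ∈ Set.Ioo (0 : ℝ) 1)
    (Rm Rh : EuclideanSpace ℝ (Fin m) → EuclideanSpace ℝ (Fin m))
    (hRm : Rm ∈ PartiallyLinearDenoisers μ x nhat ε)
    (hRh : Rh ∈ PartiallyLinearDenoisers μ x nhat ε)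
    (hRm2 : MemLp (fun ω => Rm (yhat ω)) 2 μ)
    (hRh2 : MemLp (fun ω => Rh (yhat ω)) 2 μ)
    (hRmmin : ∀ R ∈ PartiallyLinearDenoisers μ x nhat ε,
      ∫ ω, ‖Rm (yhat ω) - x ω‖ ^ 2 ∂μ ≤ (∫ ω, ‖R (yhat ω) - x ω‖ ^ 2 ∂μ) + δ)
    (hRhmin : ∀ R ∈ PartiallyLinearDenoisers μ x nhat ε,
      ∫ ω, ‖Rh (yhat ω) - (y ω - α⁻¹ • z ω)‖ ^ 2 ∂μ
        ≤ (∫ ω, ‖R (yhat ω) - (y ω - α⁻¹ • z ω)‖ ^ 2 ∂μ) + δ)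
    (x₀ : EuclideanSpace ℝ (Fin m)) (hx₀ : ∀ᵐ ω ∂μ, x ω = x₀) :
    ∫ ω, ‖Rm (yhat ω) - Rh (yhat ω)‖ ^ 2 ∂μ
      ≤ (ε ^ 2 + 2 * Real.sqrt δ) / (1 - Real.sqrt δ) := by
  classical
  obtain ⟨hδ0, hδ1⟩ := hδ
  have hm' : MeasurableSpace.comap x inferInstance ≤ _ := hx.comap_le
  -- pointwise facts
  have hyω : ∀ ω, y ω = x ω + n ω := fun ω => by rw [hy]
  have hnhatω : ∀ ω, nhat ω = n ω + α • z ω := fun ω => by rw [hnhat]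
  have hyhatω : ∀ ω, yhat ω = x ω + nhat ω := fun ω => by rw [hyhat]
  -- basic integrability
  have hnInt : Integrable n μ := hn2.integrable one_le_two
  have hzInt : Integrable z μ := hz2.integrable one_le_two
  have hnhat2 : MemLp nhat 2 μ := by
    rw [hnhat]; exact hn2.add (hz2.const_smul α)
  have hnhat2' : MemLp (fun ω => nhat ω) 2 μ := hnhat2
  have hyhat2 : MemLp yhat 2 μ := by
    rw [hyhat]
    exact hx2.add hnhat2'
  -- components
  have hcomp2 : ∀ (f : Ω → EuclideanSpace ℝ (Fin m)), MemLp f 2 μ →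
      ∀ i, MemLp (fun ω => f ω i) 2 μ := by
    intro f hf i
    have := (EuclideanSpace.proj (𝕜 := ℝ) i).comp_memLp' hf
    exact this
  have hmeasc : ∀ (f : Ω → EuclideanSpace ℝ (Fin m)), Measurable f →
      ∀ i, Measurable (fun ω => f ω i) := by
    intro f hf i
    have := (EuclideanSpace.proj (𝕜 := ℝ) (ι := Fin m) i).measurable.comp hf
    exact this
  -- zero means
  have hnmean : ∫ ω, n ω ∂μ = 0 := by
    have h := integral_condExp (μ := μ) (f := n) hm'
    rw [integral_congr_ae hncond] at h
    simpa using h.symm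
  have hzmean : ∫ ω, z ω ∂μ = 0 := by
    have h := integral_condExp (μ := μ) (f := z) hm'
    rw [integral_congr_ae hzcond] at h
    simpa using h.symm
  -- componentwise conditional expectations vanish
  have hncondi : ∀ i, μ[fun ω => n ω i|MeasurableSpace.comap x inferInstance] =ᵐ[μ] 0 := by
    intro i
    have := condexp_comp_clm_eq_zero hm' hnInt hncond (EuclideanSpace.proj (𝕜 := ℝ) i)
    simpa [PiLp.proj_apply] using this
  have hzcondi : ∀ i, μ[fun ω => z ω i|MeasurableSpace.comap x inferInstance] =ᵐ[μ] 0 := by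
    intro i
    have := condexp_comp_clm_eq_zero hm' hzInt hzcond (EuclideanSpace.proj (𝕜 := ℝ) i)
    simpa [PiLp.proj_apply] using this
  -- conditional independence of components
  have hindepc : ∀ i j, CondIndepFun (MeasurableSpace.comap x inferInstance) hx.comap_le
      (fun ω => n ω i) (fun ω => z ω j) μ := by
    intro i j
    have := hindep.comp (EuclideanSpace.proj (𝕜 := ℝ) (ι := Fin m) i).measurable
      (EuclideanSpace.proj (𝕜 := ℝ) (ι := Fin m) j).measurable
    exact this
  -- cross moments vanish
  have hnz : ∀ i j, ∫ ω, n ω i * z ω j ∂μ = 0 := fun i j =>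
    integral_mul_eq_zero_of_condIndepFun hm' (hmeasc n hn i) (hmeasc z hz j)
      (hcomp2 n hn2 i) (hcomp2 z hz2 j) (hindepc i j) (hncondi i)
  have hzn : ∀ i j, ∫ ω, z ω i * n ω j ∂μ = 0 := by
    intro i j
    have h := hnz j i
    rw [show (fun ω => z ω i * n ω j) = fun ω => n ω j * z ω i from funext fun ω => mul_comm _ _]
    exact h
  -- matched covariances
  have hcov' : ∀ i j, ∫ ω, n ω i * n ω j ∂μ = ∫ ω, z ω i * z ω j ∂μ := by
    intro i j
    have h1 := integral_condExp (μ := μ) (f := fun ω => n ω i * n ω j) hm'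
    have h2 := integral_condExp (μ := μ) (f := fun ω => z ω i * z ω j) hm'
    rw [← h1, ← h2]
    exact integral_congr_ae (hcov i j)
  -- main objects
  set u1 : Ω → EuclideanSpace ℝ (Fin m) := fun ω => Rm (yhat ω) - x ω with hu1def
  set u2 : Ω → EuclideanSpace ℝ (Fin m) := fun ω => Rh (yhat ω) - x ω with hu2def
  set w : Ω → EuclideanSpace ℝ (Fin m) := fun ω => n ω - α⁻¹ • z ω with hwdef
  have hu1 : MemLp u1 2 μ := hRm2.sub hx2
  have hu2 : MemLp u2 2 μ := hRh2.sub hx2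
  have hw2 : MemLp w 2 μ := hn2.sub (hz2.const_smul α⁻¹)
  have hwInt : Integrable w μ := hw2.integrable one_le_two
  have hzsInt : Integrable (fun ω => α⁻¹ • z ω) μ := hzInt.smul α⁻¹
  have hw0 : ∫ ω, w ω ∂μ = 0 := by
    rw [hwdef, integral_sub hnInt hzsInt, integral_smul, hnmean, hzmean]
    simp
  -- STEP A : ∫ ‖u1‖² ≤ δ
  have memA : (fun _ : EuclideanSpace ℝ (Fin m) => x₀) ∈ PartiallyLinearDenoisers μ x nhat ε := by
    refine ⟨measurable_const, fun _ => x₀, fun _ => 0, fun _ => 0, measurable_const,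
      memLp_const 0, Filter.Eventually.of_forall fun ω => by simp, ?_⟩
    simp only [norm_zero]
    rw [show (fun (_ : Ω) => (0:ℝ)^2) = fun _ => (0:ℝ) from funext fun _ => by norm_num]
    rw [integral_zero]
    positivity
  have hA : ∫ ω, ‖u1 ω‖^2 ∂μ ≤ δ := by
    have h := hRmmin _ memA
    have h0 : ∫ ω, ‖(fun _ : EuclideanSpace ℝ (Fin m) => x₀) (yhat ω) - x ω‖^2 ∂μ = 0 := by
      have he : (fun ω => ‖(fun _ : EuclideanSpace ℝ (Fin m) => x₀) (yhat ω) - x ω‖^2)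
          =ᵐ[μ] fun _ => (0:ℝ) := by
        filter_upwards [hx₀] with ω h'
        simp [h']
      rw [integral_congr_ae he, integral_zero]
    rw [h0] at h
    simpa using h
  -- STEP B : ∫ ‖u2‖² ≤ ε² + δ
  obtain ⟨hRhMeas, g2, L2c, e2, hg2, he2, hde2, hee2⟩ := hRh
  set R0 : EuclideanSpace ℝ (Fin m) → EuclideanSpace ℝ (Fin m) :=
    fun v => x₀ + (Rh v - g2 x₀ - L2c x₀ (v - x₀)) with hR0def
  have hLn2 : MemLp (fun ω => L2c x₀ (nhat ω)) 2 μ := by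
    exact (L2c x₀).comp_memLp' hnhat2
  have he0 : MemLp (fun ω => Rh (yhat ω) - g2 x₀ - L2c x₀ (yhat ω - x₀)) 2 μ := by
    have h1 : MemLp (fun ω => yhat ω - x₀) 2 μ := hyhat2.sub (memLp_const x₀)
    have h2 : MemLp (fun ω => L2c x₀ (yhat ω - x₀)) 2 μ := (L2c x₀).comp_memLp' h1
    exact (hRh2.sub (memLp_const (g2 x₀))).sub h2
  have he0ae : (fun ω => Rh (yhat ω) - g2 x₀ - L2c x₀ (yhat ω - x₀)) =ᵐ[μ] e2 := by
    filter_upwards [hx₀, hde2] with ω h0 hd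
    show Rh (yhat ω) - g2 x₀ - L2c x₀ (yhat ω - x₀) = e2 ω
    rw [hyhatω ω, hd, h0]
    simp only [add_sub_cancel_left]
    abel
  have memB : R0 ∈ PartiallyLinearDenoisers μ x nhat ε := by
    refine ⟨?_, fun _ => x₀, fun _ => 0,
      fun ω => Rh (yhat ω) - g2 x₀ - L2c x₀ (yhat ω - x₀), measurable_const, he0, ?_, ?_⟩
    · exact measurable_const.add ((hRhMeas.sub measurable_const).sub
        ((L2c x₀).measurable.comp (measurable_id.sub measurable_const)))
    · refine Filter.Eventually.of_forall fun ω => ?_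
      simp only [hR0def, hyhatω, ContinuousLinearMap.zero_apply, add_zero]
    · have : ∫ ω, ‖Rh (yhat ω) - g2 x₀ - L2c x₀ (yhat ω - x₀)‖^2 ∂μ = ∫ ω, ‖e2 ω‖^2 ∂μ :=
        integral_congr_ae (he0ae.mono fun ω h => by simp only [h])
      rw [this]
      exact hee2
  have hB : ∫ ω, ‖u2 ω‖^2 ∂μ ≤ ε^2 + δ := by
    have hmain := hRhmin _ memB
    have hL : ∫ ω, ‖Rh (yhat ω) - (y ω - α⁻¹ • z ω)‖^2 ∂μ = ∫ ω, ‖u2 ω - w ω‖^2 ∂μ := by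
      refine integral_congr_ae (Filter.Eventually.of_forall fun ω => ?_)
      show ‖Rh (yhat ω) - (y ω - α⁻¹ • z ω)‖ ^ 2 = ‖u2 ω - w ω‖ ^ 2
      rw [show Rh (yhat ω) - (y ω - α⁻¹ • z ω) = u2 ω - w ω by
        simp only [hu2def, hwdef, hyω]; abel]
    have hR : ∫ ω, ‖R0 (yhat ω) - (y ω - α⁻¹ • z ω)‖^2 ∂μ = ∫ ω, ‖e2 ω - w ω‖^2 ∂μ := by
      refine integral_congr_ae ?_
      filter_upwards [hx₀, he0ae] with ω h0 he'
      show ‖R0 (yhat ω) - (y ω - α⁻¹ • z ω)‖ ^ 2 = ‖e2 ω - w ω‖ ^ 2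
      rw [show R0 (yhat ω) - (y ω - α⁻¹ • z ω)
          = (Rh (yhat ω) - g2 x₀ - L2c x₀ (yhat ω - x₀)) + (x₀ - x ω) - w ω by
        simp only [hR0def, hwdef, hyω]; abel]
      rw [he', h0]
      simp only [sub_self, add_zero]
    rw [hL, hR] at hmain
    rw [integral_norm_sub_sq_of_memL2 hu2 hw2, integral_norm_sub_sq_of_memL2 he2 hw2] at hmain
    -- the inner-product terms agree
    have hIeq : ∫ ω, (inner ℝ (u2 ω) (w ω) : ℝ) ∂μ = ∫ ω, (inner ℝ (e2 ω) (w ω) : ℝ) ∂μ := by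
      have hdiff : ∫ ω, (inner ℝ (u2 ω - e2 ω) (w ω) : ℝ) ∂μ = 0 := by
        have hue : (fun ω => u2 ω - e2 ω)
            =ᵐ[μ] (fun ω => (g2 x₀ - x₀) + L2c x₀ (nhat ω)) := by
          filter_upwards [hx₀, hde2] with ω h0 hd
          show u2 ω - e2 ω = (g2 x₀ - x₀) + L2c x₀ (nhat ω)
          simp only [hu2def]
          rw [hyhatω ω, hd, h0]
          abel
        have hstep : ∫ ω, (inner ℝ (u2 ω - e2 ω) (w ω) : ℝ) ∂μ
            = ∫ ω, (inner ℝ ((g2 x₀ - x₀) + L2c x₀ (nhat ω)) (w ω) : ℝ) ∂μ :=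
          integral_congr_ae (hue.mono fun ω h => by simp only [h])
        have hcross : ∫ ω, (inner ℝ (L2c x₀ (nhat ω)) (w ω) : ℝ) ∂μ = 0 := by
          have hint_nw : ∀ j i, ∫ ω, nhat ω j * w ω i ∂μ = 0 := by
            intro j i
            have hptt : ∀ ω, nhat ω j * w ω i
                = (n ω j * n ω i + α * (z ω j * n ω i))
                  - α⁻¹ * (n ω j * z ω i) - z ω j * z ω i := by
              intro ω
              have h1 : nhat ω j = n ω j + α * z ω j := by
                rw [hnhatω ω]; simp [smul_eq_mul]
              have h2 : w ω i = n ω i - α⁻¹ * z ω i := by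
                rw [hwdef]; simp [smul_eq_mul]
              rw [h1, h2]
              have hαα : α * α⁻¹ = 1 := mul_inv_cancel₀ hα
              field_simp
              ring
            have Ia : Integrable (fun ω => n ω j * n ω i) μ :=
              integrable_mul_of_memL2 (hcomp2 n hn2 j) (hcomp2 n hn2 i)
            have Ib : Integrable (fun ω => α * (z ω j * n ω i)) μ :=
              (integrable_mul_of_memL2 (hcomp2 z hz2 j) (hcomp2 n hn2 i)).const_mul α
            have Ic : Integrable (fun ω => α⁻¹ * (n ω j * z ω i)) μ :=
              (integrable_mul_of_memL2 (hcomp2 n hn2 j) (hcomp2 z hz2 i)).const_mul α⁻¹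
            have Id : Integrable (fun ω => z ω j * z ω i) μ :=
              integrable_mul_of_memL2 (hcomp2 z hz2 j) (hcomp2 z hz2 i)
            have Iab : Integrable (fun ω => n ω j * n ω i + α * (z ω j * n ω i)) μ := by
              exact Ia.add Ib
            have Iabc : Integrable
                (fun ω => n ω j * n ω i + α * (z ω j * n ω i) - α⁻¹ * (n ω j * z ω i)) μ := by
              exact Iab.sub Ic
            rw [integral_congr_ae (Filter.Eventually.of_forall hptt),
              integral_sub Iabc Id, integral_sub Iab Ic,
              integral_add Ia Ib, integral_const_mul, integral_const_mul]
            rw [hcov' j i, hzn j i, hnz j i]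
            ring
          have hpt : ∀ ω, (inner ℝ (L2c x₀ (nhat ω)) (w ω) : ℝ)
              = ∑ j, ∑ i, (L2c x₀ (EuclideanSpace.single j 1)) i * (nhat ω j * w ω i) :=
            fun ω => inner_clm_expand _ _ _
          rw [integral_congr_ae (Filter.Eventually.of_forall hpt)]
          have hterm : ∀ (j i : Fin m),
              Integrable (fun ω => (L2c x₀ (EuclideanSpace.single j 1)) i * (nhat ω j * w ω i)) μ :=
            fun j i => (integrable_mul_of_memL2 (hcomp2 nhat hnhat2 j) (hcomp2 w hw2 i)).const_mul _
          rw [integral_finset_sum _ (fun j _ => integrable_finset_sum _ (fun i _ => hterm j i))]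
          refine Finset.sum_eq_zero fun j _ => ?_
          rw [integral_finset_sum _ (fun i _ => hterm j i)]
          refine Finset.sum_eq_zero fun i _ => ?_
          rw [integral_const_mul, hint_nw j i, mul_zero]
        have hconst : ∫ ω, (inner ℝ (g2 x₀ - x₀) (w ω) : ℝ) ∂μ = 0 := by
          rw [integral_inner hwInt, hw0, inner_zero_right]
        rw [hstep]
        have hsplit : ∫ ω, (inner ℝ ((g2 x₀ - x₀) + L2c x₀ (nhat ω)) (w ω) : ℝ) ∂μ
            = ∫ ω, (inner ℝ (g2 x₀ - x₀) (w ω) : ℝ) ∂μ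
              + ∫ ω, (inner ℝ (L2c x₀ (nhat ω)) (w ω) : ℝ) ∂μ := by
          rw [← integral_add (hwInt.const_inner _) (integrable_inner_of_memL2 hLn2 hw2)]
          refine integral_congr_ae (Filter.Eventually.of_forall fun ω => ?_)
          show (inner ℝ ((g2 x₀ - x₀) + L2c x₀ (nhat ω)) (w ω) : ℝ)
            = (inner ℝ (g2 x₀ - x₀) (w ω) : ℝ) + (inner ℝ (L2c x₀ (nhat ω)) (w ω) : ℝ)
          rw [inner_add_left]
        rw [hsplit, hconst, hcross, add_zero]
      have := integral_sub (integrable_inner_of_memL2 hu2 hw2) (integrable_inner_of_memL2 he2 hw2)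
      rw [show (fun ω => (inner ℝ (u2 ω) (w ω) : ℝ) - (inner ℝ (e2 ω) (w ω) : ℝ))
          = fun ω => (inner ℝ (u2 ω - e2 ω) (w ω) : ℝ) from funext fun ω => (inner_sub_left _ _ _).symm] at this
      rw [hdiff] at this
      linarith [this.symm]
    rw [hIeq] at hmain
    have := hee2
    linarith
  -- STEP C : combine
  set s := Real.sqrt δ with hsdef
  have hs0 : 0 < s := Real.sqrt_pos.2 hδ0
  have hεs : 0 < ε + s := by linarith
  set t := s / (ε + s) with htdef
  have ht : 0 < t := div_pos hs0 hεs
  have hpt : ∀ ω, ‖Rm (yhat ω) - Rh (yhat ω)‖^2 ≤ (1 + 1/t) * ‖u1 ω‖^2 + (1 + t) * ‖u2 ω‖^2 := by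
    intro ω
    have hsplit : Rm (yhat ω) - Rh (yhat ω) = u1 ω - u2 ω := by
      simp only [hu1def, hu2def]; abel
    rw [hsplit]
    exact norm_sub_sq_le_weighted ht _ _
  have hIl : Integrable (fun ω => ‖Rm (yhat ω) - Rh (yhat ω)‖^2) μ := by
    exact integrable_norm_sq_of_memL2 (hRm2.sub hRh2)
  have hIr : Integrable (fun ω => (1 + 1/t) * ‖u1 ω‖^2 + (1 + t) * ‖u2 ω‖^2) μ := by
    exact ((integrable_norm_sq_of_memL2 hu1).const_mul _).add
      ((integrable_norm_sq_of_memL2 hu2).const_mul _)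
  have hmono : ∫ ω, ‖Rm (yhat ω) - Rh (yhat ω)‖^2 ∂μ
      ≤ ∫ ω, ((1 + 1/t) * ‖u1 ω‖^2 + (1 + t) * ‖u2 ω‖^2) ∂μ :=
    integral_mono hIl hIr hpt
  have hsum : ∫ ω, ((1 + 1/t) * ‖u1 ω‖^2 + (1 + t) * ‖u2 ω‖^2) ∂μ
      = (1 + 1/t) * ∫ ω, ‖u1 ω‖^2 ∂μ + (1 + t) * ∫ ω, ‖u2 ω‖^2 ∂μ := by
    rw [integral_add (by exact (integrable_norm_sq_of_memL2 hu1).const_mul _)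
      (by exact (integrable_norm_sq_of_memL2 hu2).const_mul _), integral_const_mul,
      integral_const_mul]
  have hco1 : (0:ℝ) ≤ 1 + 1/t := by positivity
  have hco2 : (0:ℝ) ≤ 1 + t := by positivity
  have hfinal := final_num hε hδ0 hδ1
  calc ∫ ω, ‖Rm (yhat ω) - Rh (yhat ω)‖^2 ∂μ
      ≤ (1 + 1/t) * ∫ ω, ‖u1 ω‖^2 ∂μ + (1 + t) * ∫ ω, ‖u2 ω‖^2 ∂μ := by
        rw [← hsum]; exact hmono
    _ ≤ (1 + 1/t) * δ + (1 + t) * (ε^2 + δ) := by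
        have h1 := mul_le_mul_of_nonneg_left hA hco1
        have h2 := mul_le_mul_of_nonneg_left hB hco2
        linarith
    _ ≤ (ε^2 + 2*s) / (1 - s) := by
        rw [htdef, hsdef]
        exact hfinal
end
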